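/- Let K ≥ 2 be an integer. The function g⁻¹(α) = ψ(Kα + 1) − ψ(α + 1) is strictly increasing on [0, ∞), where ψ(t) = d/dt log Γ(t) is the digamma function; equivalently, its derivative K ψ₁(Kα + 1) − ψ₁(α + 1) is strictly positive for all α ≥ 0, where ψ₁ = ψ′ is the trigamma function. -/

import Mathlib

open Real Filter Topology Finset

/-- The digamma function `ψ(t) = d/dt log Γ(t)`. -/
noncomputable def digamma (t : ℝ) : ℝ := deriv (fun s : ℝ => Real.log (Real.Gamma s)) t

/-- The trigamma function `ψ₁ = ψ′`. -/
noncomputable def trigamma (t : ℝ) : ℝ := deriv digamma t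

namespace NSB

/-- The trigamma series. -/
noncomputable def psi1 (x : ℝ) : ℝ := ∑' k : ℕ, ((x + k) ^ 2)⁻¹

/-- The digamma limit function. -/
noncomputable def dg (x : ℝ) : ℝ :=
  -Real.eulerMascheroniConstant + ∑' k : ℕ, (x - 1) / (((k : ℝ) + 1) * (x + k))

noncomputable def f0 (n : ℕ) (x : ℝ) : ℝ :=
  x * Real.log n + Real.log (Nat.factorial n : ℝ) - ∑ k ∈ Finset.range (n + 1), Real.log (x + k)

noncomputable def f1 (n : ℕ) (x : ℝ) : ℝ :=
  Real.log n - ∑ k ∈ Finset.range (n + 1), (x + (k : ℝ))⁻¹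

noncomputable def f2 (n : ℕ) (x : ℝ) : ℝ :=
  ∑ k ∈ Finset.range (n + 1), ((x + (k : ℝ)) ^ 2)⁻¹

lemma sum_sq_base : Summable (fun k : ℕ => (((k : ℝ) + 1) ^ 2)⁻¹) := by
  have h : Summable (fun n : ℕ => 1 / (n : ℝ) ^ 2) :=
    Real.summable_one_div_nat_pow.mpr (by norm_num)
  have := (summable_nat_add_iff 1).mpr h
  simpa [one_div] using this

lemma base_le {m x : ℝ} (hm1 : m ≤ 1) (hmx : m ≤ x) (k : ℕ) :
    m * ((k : ℝ) + 1) ≤ x + k := by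
  have hk : (0 : ℝ) ≤ k := Nat.cast_nonneg k
  nlinarith

lemma summable_psi1 {x : ℝ} (hx : 0 < x) : Summable (fun k : ℕ => ((x + (k : ℝ)) ^ 2)⁻¹) := by
  set m := min x 1 with hm
  have hm0 : 0 < m := lt_min hx one_pos
  have hb : ∀ k : ℕ, 0 < m * ((k : ℝ) + 1) := fun k => by positivity
  refine Summable.of_nonneg_of_le (fun k => by positivity) (fun k => ?_)
    ((sum_sq_base).mul_left ((m ^ 2)⁻¹))
  have h1 : m * ((k : ℝ) + 1) ≤ x + k := base_le (min_le_right x 1) (min_le_left x 1) k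
  have h2 : ((x + (k : ℝ)) ^ 2)⁻¹ ≤ ((m * ((k : ℝ) + 1)) ^ 2)⁻¹ := by
    gcongr
  calc ((x + (k : ℝ)) ^ 2)⁻¹ ≤ ((m * ((k : ℝ) + 1)) ^ 2)⁻¹ := h2
    _ = (m ^ 2)⁻¹ * (((k : ℝ) + 1) ^ 2)⁻¹ := by rw [mul_pow, mul_inv]

lemma f1_eq (n : ℕ) {x : ℝ} (hx : 0 < x) :
    f1 n x = (Real.log n - ∑ k ∈ Finset.range (n + 1), ((k : ℝ) + 1)⁻¹)
      + ∑ k ∈ Finset.range (n + 1), (x - 1) / (((k : ℝ) + 1) * (x + k)) := by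
  have hterm : ∀ k ∈ Finset.range (n + 1),
      (x + (k : ℝ))⁻¹ = ((k : ℝ) + 1)⁻¹ - (x - 1) / (((k : ℝ) + 1) * (x + k)) := by
    intro k _
    have h1 : x + (k : ℝ) ≠ 0 := by positivity
    have h2 : (k : ℝ) + 1 ≠ 0 := by positivity
    field_simp
    try ring
  rw [f1, Finset.sum_congr rfl hterm, Finset.sum_sub_distrib]
  ring

lemma harmonic_cast (m : ℕ) : ((harmonic m : ℚ) : ℝ) = ∑ k ∈ Finset.range m, ((k : ℝ) + 1)⁻¹ := by
  rw [harmonic]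
  push_cast
  rfl

lemma tendsto_c :
    Tendsto (fun n : ℕ => Real.log n - ∑ k ∈ Finset.range (n + 1), ((k : ℝ) + 1)⁻¹)
      atTop (𝓝 (-Real.eulerMascheroniConstant)) := by
  have h1 := Real.tendsto_harmonic_sub_log
  have h2 : Tendsto (fun n : ℕ => ((n : ℝ) + 1)⁻¹) atTop (𝓝 0) :=
 by
    have hnat : Tendsto (fun n : ℕ => (n : ℝ) + 1) atTop atTop :=
      tendsto_atTop_add_const_right atTop (1 : ℝ) tendsto_natCast_atTop_atTop
    exact tendsto_inv_atTop_zero.comp hnat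
  have h3 := (h1.add h2).neg
  rw [add_zero] at h3
  refine h3.congr fun n => ?_
  have hc : ((harmonic (n + 1) : ℚ) : ℝ) = ((harmonic n : ℚ) : ℝ) + ((n : ℝ) + 1)⁻¹ := by
    rw [harmonic_succ]; push_cast; ring
  rw [← harmonic_cast (n + 1), hc]
  ring

lemma tlu_f1 : TendstoLocallyUniformlyOn f1 dg atTop (Set.Ioi (0 : ℝ)) := by
  rw [tendstoLocallyUniformlyOn_iff_forall_isCompact isOpen_Ioi]
  intro Kc hKc hc
  rcases Kc.eq_empty_or_nonempty with rfl | hne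
  · exact tendstoUniformlyOn_empty
  obtain ⟨ε, hεK, hεlb⟩ := hc.exists_isLeast hne
  obtain ⟨R, hRK, hRub⟩ := hc.exists_isGreatest hne
  have hε : 0 < ε := hKc hεK
  set m := min ε 1 with hm
  have hm0 : 0 < m := lt_min hε one_pos
  have hbound : ∀ k : ℕ, ∀ x ∈ Kc,
      ‖(x - 1) / (((k : ℝ) + 1) * (x + k))‖ ≤ (R + 1) / m * (((k : ℝ) + 1) ^ 2)⁻¹ := by
    intro k x hxK
    have hx : 0 < x := hKc hxK
    have hxε : ε ≤ x := hεlb hxK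
    have hxR : x ≤ R := hRub hxK
    have hR0 : 0 < R := lt_of_lt_of_le hx hxR
    have hden : 0 < ((k : ℝ) + 1) * (x + k) := by positivity
    have hnum : |x - 1| ≤ R + 1 := by
      rw [abs_le]; constructor <;> nlinarith
    have hml : m * ((k : ℝ) + 1) ≤ x + k :=
      base_le (min_le_right ε 1) (le_trans (min_le_left ε 1) hxε) k
    have hden2 : m * ((k : ℝ) + 1) ^ 2 ≤ ((k : ℝ) + 1) * (x + k) := by
      have hk : (0 : ℝ) ≤ k := Nat.cast_nonneg k
      nlinarith
    have hrhs : (R + 1) / m * (((k : ℝ) + 1) ^ 2)⁻¹ = (R + 1) / (m * ((k : ℝ) + 1) ^ 2) := by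
      field_simp
    rw [norm_div, Real.norm_eq_abs, Real.norm_eq_abs, abs_of_pos hden, hrhs]
    exact div_le_div₀ (by linarith) hnum (by positivity) hden2
  have hsum : Summable (fun k : ℕ => (R + 1) / m * (((k : ℝ) + 1) ^ 2)⁻¹) :=
    sum_sq_base.mul_left _
  have hbase := tendstoUniformlyOn_tsum_nat hsum hbound
  have hseries : TendstoUniformlyOn
      (fun n x => ∑ k ∈ Finset.range (n + 1), (x - 1) / (((k : ℝ) + 1) * (x + k)))
      (fun x => ∑' k : ℕ, (x - 1) / (((k : ℝ) + 1) * (x + k))) atTop Kc := by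
    intro u hu
    exact (tendsto_add_atTop_nat 1).eventually (hbase u hu)
  have hconst : TendstoUniformlyOn
      (fun (n : ℕ) (_ : ℝ) => Real.log (n : ℝ) - ∑ k ∈ Finset.range (n + 1), ((k : ℝ) + 1)⁻¹)
      (fun _ => -Real.eulerMascheroniConstant) atTop Kc :=
    tendsto_c.tendstoUniformlyOn_const Kc
  have := hconst.add hseries
  refine (this.congr ?_).congr_right ?_
  · filter_upwards with n
    intro x hxK
    exact (f1_eq n (hKc hxK)).symm
  · intro x _
    rfl

lemma tlu_f2 : TendstoLocallyUniformlyOn f2 psi1 atTop (Set.Ioi (0 : ℝ)) := by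
  rw [tendstoLocallyUniformlyOn_iff_forall_isCompact isOpen_Ioi]
  intro Kc hKc hc
  rcases Kc.eq_empty_or_nonempty with rfl | hne
  · exact tendstoUniformlyOn_empty
  obtain ⟨ε, hεK, hεlb⟩ := hc.exists_isLeast hne
  have hε : 0 < ε := hKc hεK
  set m := min ε 1 with hm
  have hm0 : 0 < m := lt_min hε one_pos
  have hbound : ∀ k : ℕ, ∀ x ∈ Kc,
      ‖((x + (k : ℝ)) ^ 2)⁻¹‖ ≤ (m ^ 2)⁻¹ * (((k : ℝ) + 1) ^ 2)⁻¹ := by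
    intro k x hxK
    have hx : 0 < x := hKc hxK
    have hxε : ε ≤ x := hεlb hxK
    have hml : m * ((k : ℝ) + 1) ≤ x + k :=
      base_le (min_le_right ε 1) (le_trans (min_le_left ε 1) hxε) k
    have h2 : ((x + (k : ℝ)) ^ 2)⁻¹ ≤ ((m * ((k : ℝ) + 1)) ^ 2)⁻¹ := by
      gcongr
    rw [Real.norm_eq_abs, abs_of_pos (by positivity)]
    calc ((x + (k : ℝ)) ^ 2)⁻¹ ≤ ((m * ((k : ℝ) + 1)) ^ 2)⁻¹ := h2
      _ = (m ^ 2)⁻¹ * (((k : ℝ) + 1) ^ 2)⁻¹ := by rw [mul_pow, mul_inv]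
  have hsum : Summable (fun k : ℕ => (m ^ 2)⁻¹ * (((k : ℝ) + 1) ^ 2)⁻¹) :=
    sum_sq_base.mul_left _
  have hbase := tendstoUniformlyOn_tsum_nat hsum hbound
  intro u hu
  exact (tendsto_add_atTop_nat 1).eventually (hbase u hu)

lemma hasDerivAt_f0 (n : ℕ) {x : ℝ} (hx : 0 < x) : HasDerivAt (f0 n) (f1 n x) x := by
  have hsum : HasDerivAt (fun x : ℝ => ∑ k ∈ Finset.range (n + 1), Real.log (x + k))
      (∑ k ∈ Finset.range (n + 1), (x + (k : ℝ))⁻¹) x := by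
    refine HasDerivAt.fun_sum fun k _ => ?_
    have h : x + (k : ℝ) ≠ 0 := by positivity
    have := (Real.hasDerivAt_log h).comp x ((hasDerivAt_id x).add_const (k : ℝ))
    simp at this
    exact this
  have h1 : HasDerivAt (fun x : ℝ => x * Real.log n + Real.log (Nat.factorial n : ℝ)) (Real.log n) x := by
    simpa using ((hasDerivAt_id x).mul_const (Real.log n)).add_const (Real.log (Nat.factorial n : ℝ))
  exact h1.sub hsum

lemma hasDerivAt_f1 (n : ℕ) {x : ℝ} (hx : 0 < x) : HasDerivAt (f1 n) (f2 n x) x := by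
  have hsum : HasDerivAt (fun x : ℝ => ∑ k ∈ Finset.range (n + 1), (x + (k : ℝ))⁻¹)
      (∑ k ∈ Finset.range (n + 1), -((x + (k : ℝ)) ^ 2)⁻¹) x := by
    refine HasDerivAt.fun_sum fun k _ => ?_
    have h : x + (k : ℝ) ≠ 0 := by positivity
    have := ((hasDerivAt_id x).add_const (k : ℝ)).inv h
    simp [neg_div, one_div] at this
    exact this
  have h1 := (hasDerivAt_const x (Real.log n)).sub hsum
  have h2 : (0 : ℝ) - ∑ k ∈ Finset.range (n + 1), -((x + (k : ℝ)) ^ 2)⁻¹ = f2 n x := by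
    rw [f2, Finset.sum_neg_distrib]; ring
  rw [h2] at h1
  exact h1

lemma tendsto_f0 {x : ℝ} (hx : 0 < x) :
    Tendsto (fun n => f0 n x) atTop (𝓝 (Real.log (Real.Gamma x))) := by
  have h := (Real.continuousAt_log (Real.Gamma_pos_of_pos hx).ne').tendsto.comp
    (Real.GammaSeq_tendsto_Gamma x)
  refine h.congr' ?_
  filter_upwards [eventually_ge_atTop 1] with n hn
  have hn0 : (0 : ℝ) < n := by exact_mod_cast hn
  have hfact : (0 : ℝ) < (Nat.factorial n : ℝ) := by exact_mod_cast n.factorial_pos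
  have hP : (0 : ℝ) < ∏ j ∈ Finset.range (n + 1), (x + (j : ℝ)) :=
    Finset.prod_pos fun j _ => by positivity
  have hpow : (0 : ℝ) < (n : ℝ) ^ x := Real.rpow_pos_of_pos hn0 x
  show Real.log (Real.GammaSeq x n) = f0 n x
  rw [Real.GammaSeq, Real.log_div (by positivity) hP.ne',
    Real.log_mul hpow.ne' hfact.ne', Real.log_rpow hn0,
    Real.log_prod (s := Finset.range (n + 1)) (f := fun j => x + (j : ℝ)) (fun j _ => by positivity), f0]

lemma hasDerivAt_logGamma {x : ℝ} (hx : 0 < x) :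
    HasDerivAt (fun s : ℝ => Real.log (Real.Gamma s)) (dg x) x :=
  hasDerivAt_of_tendstoLocallyUniformlyOn isOpen_Ioi tlu_f1
    (Eventually.of_forall fun n y hy => hasDerivAt_f0 n hy)
    (fun y hy => tendsto_f0 hy) hx

lemma digamma_eq {x : ℝ} (hx : 0 < x) : digamma x = dg x :=
  (hasDerivAt_logGamma hx).deriv

lemma hasDerivAt_digamma {x : ℝ} (hx : 0 < x) : HasDerivAt digamma (psi1 x) x := by
  refine hasDerivAt_of_tendstoLocallyUniformlyOn isOpen_Ioi tlu_f2
    (Eventually.of_forall fun n y hy => hasDerivAt_f1 n hy) (fun y hy => ?_) hx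
  rw [digamma_eq hy]
  exact tlu_f1.tendsto_at hy

lemma trigamma_eq {x : ℝ} (hx : 0 < x) : trigamma x = psi1 x :=
  (hasDerivAt_digamma hx).deriv

lemma key (K : ℕ) (hK : 2 ≤ K) {α : ℝ} (hα : 0 ≤ α) :
    psi1 (α + 1) < (K : ℝ) * psi1 ((K : ℝ) * α + 1) := by
  have hK0 : (0 : ℝ) < K := by exact_mod_cast (by omega : 0 < K)
  have hK1 : (1 : ℝ) < K := by exact_mod_cast (by omega : 1 < K)
  have hy : (0 : ℝ) < (K : ℝ) * α + 1 := by nlinarith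
  set F : ℕ → ℝ := fun n => (K : ℝ) * (((K : ℝ) * α + 1 + (n : ℝ)) ^ 2)⁻¹ with hF
  have hsumF : Summable F := (summable_psi1 hy).mul_left (K : ℝ)
  have hlhs : ∀ m : ℕ, (K : ℝ)⁻¹ * ((α + 1 + (m : ℝ)) ^ 2)⁻¹
      = (K : ℝ) * (((K : ℝ) * (α + 1 + (m : ℝ))) ^ 2)⁻¹ := by
    intro m
    have hden : (0 : ℝ) < α + 1 + (m : ℝ) := by positivity
    field_simp
  have hle : ∀ (m : ℕ) (j : Fin K),
      (K : ℝ)⁻¹ * ((α + 1 + (m : ℝ)) ^ 2)⁻¹ ≤ F (m * K + (j : ℕ)) := by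
    intro m j
    have hj1 : ((j : ℕ) : ℝ) + 1 ≤ (K : ℝ) := by exact_mod_cast j.isLt
    have hcast : (((m * K + (j : ℕ) : ℕ)) : ℝ) = (m : ℝ) * K + (j : ℕ) := by push_cast; ring
    have hpos : (0 : ℝ) < (K : ℝ) * α + 1 + ((m : ℝ) * K + (j : ℕ)) := by positivity
    have hub : (K : ℝ) * α + 1 + ((m : ℝ) * K + (j : ℕ)) ≤ (K : ℝ) * (α + 1 + (m : ℝ)) := by
      nlinarith
    rw [hlhs m, hF]
    simp only [hcast]
    gcongr
  have hlt : ∀ m : ℕ,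
      (K : ℝ)⁻¹ * ((α + 1 + (m : ℝ)) ^ 2)⁻¹ < F (m * K + ((⟨0, by omega⟩ : Fin K) : ℕ)) := by
    intro m
    have hcast : (((m * K + 0 : ℕ)) : ℝ) = (m : ℝ) * K := by push_cast; ring
    have hpos : (0 : ℝ) < (K : ℝ) * α + 1 + (m : ℝ) * K := by positivity
    have hub : (K : ℝ) * α + 1 + (m : ℝ) * K < (K : ℝ) * (α + 1 + (m : ℝ)) := by nlinarith
    rw [hlhs m, hF]
    simp only [hcast]
    gcongr
  have hmain : ∀ m : ℕ, ((α + 1 + (m : ℝ)) ^ 2)⁻¹ < ∑ j : Fin K, F (m * K + (j : ℕ)) := by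
    intro m
    have hcard : ((α + 1 + (m : ℝ)) ^ 2)⁻¹
        = ∑ _j : Fin K, (K : ℝ)⁻¹ * ((α + 1 + (m : ℝ)) ^ 2)⁻¹ := by
      rw [Finset.sum_const, Finset.card_univ, Fintype.card_fin, nsmul_eq_mul]
      field_simp
    rw [hcard]
    exact Finset.sum_lt_sum (fun j _ => hle m j)
      ⟨⟨0, by omega⟩, Finset.mem_univ _, hlt m⟩
  haveI : NeZero K := ⟨by omega⟩
  have hsum2 : Summable (fun p : ℕ × Fin K => F (p.1 * K + (p.2 : ℕ))) := by
    have h := (Nat.divModEquiv K).symm.summable_iff.mpr hsumF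
    exact h.congr fun p => by rw [Function.comp_apply, Nat.divModEquiv_symm_apply]
  have hinj : ∀ j : Fin K, Function.Injective (fun m : ℕ => m * K + (j : ℕ)) := by
    intro j a b h
    simp only at h
    have := Nat.add_right_cancel h
    exact Nat.eq_of_mul_eq_mul_right (by omega) this
  have houter : Summable (fun m : ℕ => ∑ j : Fin K, F (m * K + (j : ℕ))) := by
    refine summable_sum fun j _ => ?_
    exact hsumF.comp_injective (hinj j)
  have hinner : ∀ m : ℕ, Summable (fun j : Fin K => F (m * K + (j : ℕ))) :=
    fun m => Summable.of_finite
  calc psi1 (α + 1) = ∑' m : ℕ, ((α + 1 + (m : ℝ)) ^ 2)⁻¹ := rfl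
    _ < ∑' m : ℕ, ∑ j : Fin K, F (m * K + (j : ℕ)) :=
        Summable.tsum_lt_tsum_of_nonneg (fun m => by positivity) (fun m => (hmain m).le)
          (hmain 0) houter
    _ = ∑' m : ℕ, ∑' j : Fin K, F (m * K + (j : ℕ)) :=
        tsum_congr fun m => (tsum_fintype _).symm
    _ = ∑' p : ℕ × Fin K, F (p.1 * K + (p.2 : ℕ)) :=
        (Summable.tsum_prod' hsum2 fun m => hinner m).symm
    _ = ∑' n : ℕ, F n := by
        rw [← (Nat.divModEquiv K).symm.tsum_eq F]
        exact tsum_congr fun p => by rw [Nat.divModEquiv_symm_apply]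
    _ = (K : ℝ) * psi1 ((K : ℝ) * α + 1) := tsum_mul_left

lemma hasDerivAt_main (K : ℕ) {α : ℝ} (h1 : 0 < (K : ℝ) * α + 1) (h2 : 0 < α + 1) :
    HasDerivAt (fun α : ℝ => digamma ((K : ℝ) * α + 1) - digamma (α + 1))
      ((K : ℝ) * psi1 ((K : ℝ) * α + 1) - psi1 (α + 1)) α := by
  have hA := (hasDerivAt_digamma h1).comp α
    (((hasDerivAt_id α).const_mul (K : ℝ)).add_const 1)
  have hB := (hasDerivAt_digamma h2).comp α ((hasDerivAt_id α).add_const 1)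
  have := hA.sub hB
  exact this.congr_deriv (by ring)

end NSB

theorem nsb_strictMono (K : ℕ) (hK : 2 ≤ K) :
    StrictMonoOn (fun α : ℝ => digamma ((K : ℝ) * α + 1) - digamma (α + 1))
        (Set.Ici (0 : ℝ)) ∧
      ∀ α : ℝ, 0 ≤ α → 0 < (K : ℝ) * trigamma ((K : ℝ) * α + 1) - trigamma (α + 1) := by
  have hpos : ∀ α : ℝ, 0 ≤ α → 0 < (K : ℝ) * α + 1 := by
    intro α hα
    have : (0 : ℝ) ≤ (K : ℝ) * α := mul_nonneg (Nat.cast_nonneg K) hα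
    linarith
  constructor
  · apply strictMonoOn_of_deriv_pos (convex_Ici 0)
    · intro α hα
      exact (NSB.hasDerivAt_main K (hpos α hα) (by linarith [Set.mem_Ici.mp hα])
        ).continuousAt.continuousWithinAt
    · intro α hα
      rw [interior_Ici] at hα
      have hα0 : (0 : ℝ) ≤ α := hα.le
      rw [(NSB.hasDerivAt_main K (hpos α hα0) (by linarith)).deriv]
      have := NSB.key K hK hα0
      linarith
  · intro α hα
    rw [NSB.trigamma_eq (hpos α hα), NSB.trigamma_eq (by linarith : (0:ℝ) < α + 1)]
    have := NSB.key K hK hα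
    linarith
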